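/- If G is a connected, claw-free, cubic graph in which every vertex lies in a triangle and G contains no diamond (so the triangle-diamond partition consists only of triangle-units), then α(G) = n(G)/3, and every maximum independent set of G contains exactly one vertex from every triangle of G. -/

import Mathlib

open SimpleGraph Set

variable {V : Type*}

/-- One step of the (p,q)-spreading color change rule: a white vertex `w` with at least `p`
blue neighbors, at least one of which has at most `q` white neighbors, becomes blue. -/
def spreadStep (G : SimpleGraph V) (p : ℕ) (q : ℕ∞) (B : Set V) : Set V :=
  B ∪ {w | p ≤ (G.neighborSet w ∩ B).ncard ∧
      ∃ u ∈ G.neighborSet w ∩ B, ((G.neighborSet u \ B).ncard : ℕ∞) ≤ q}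

/-- `S` is a (p,q)-spreading set if iterating the rule eventually colors all vertices blue. -/
def IsSpreadingSet (G : SimpleGraph V) (p : ℕ) (q : ℕ∞) (S : Set V) : Prop :=
  ∃ n : ℕ, (spreadStep G p q)^[n] S = Set.univ

/-- The (p,q)-spreading number σ_{(p,q)}(G). -/
noncomputable def spreadNumber (G : SimpleGraph V) (p : ℕ) (q : ℕ∞) : ℕ :=
  sInf {k | ∃ S : Set V, S.ncard = k ∧ IsSpreadingSet G p q S}

/-- One step of r-neighbor bootstrap percolation. -/
def percStep (G : SimpleGraph V) (r : ℕ) (B : Set V) : Set V :=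
  B ∪ {w | r ≤ (G.neighborSet w ∩ B).ncard}

/-- `S` is an r-percolating set of `G`. -/
def IsPercolating (G : SimpleGraph V) (r : ℕ) (S : Set V) : Prop :=
  ∃ n : ℕ, (percStep G r)^[n] S = Set.univ

/-- The r-percolation number m(G,r). -/
noncomputable def percNumber (G : SimpleGraph V) (r : ℕ) : ℕ :=
  sInf {k | ∃ S : Set V, S.ncard = k ∧ IsPercolating G r S}

/-- A vertex cover of `G`. -/
def IsVertexCover (G : SimpleGraph V) (C : Set V) : Prop :=
  ∀ ⦃u v : V⦄, G.Adj u v → u ∈ C ∨ v ∈ C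

/-- The vertex cover number β(G). -/
noncomputable def coverNumber (G : SimpleGraph V) : ℕ :=
  sInf {k | ∃ C : Set V, C.ncard = k ∧ _root_.IsVertexCover G C}

/-- An independent set of `G`. -/
def IsIndep (G : SimpleGraph V) (I : Set V) : Prop :=
  I.Pairwise fun u v => ¬ G.Adj u v

/-- The independence number α(G). -/
noncomputable def indepNumber (G : SimpleGraph V) : ℕ :=
  sSup {k | ∃ I : Set V, I.ncard = k ∧ IsIndep G I}

/-- `G` has no induced `K_{1,3}`. -/
def ClawFree (G : SimpleGraph V) : Prop :=
  ¬ ∃ v a b c : V, a ≠ b ∧ a ≠ c ∧ b ≠ c ∧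
    G.Adj v a ∧ G.Adj v b ∧ G.Adj v c ∧ ¬ G.Adj a b ∧ ¬ G.Adj a c ∧ ¬ G.Adj b c

/-- The set `T` is (the vertex set of) a triangle of `G`. -/
def IsTriangle (G : SimpleGraph V) (T : Set V) : Prop :=
  ∃ a b c : V, a ≠ b ∧ a ≠ c ∧ b ≠ c ∧
    G.Adj a b ∧ G.Adj a c ∧ G.Adj b c ∧ T = {a, b, c}

/-- The set `D` induces a diamond (`K_4` minus the edge `ab`) in `G`. -/
def IsDiamond (G : SimpleGraph V) (D : Set V) : Prop :=
  ∃ a b c d : V, a ≠ b ∧ a ≠ c ∧ a ≠ d ∧ b ≠ c ∧ b ≠ d ∧ c ≠ d ∧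
    ¬ G.Adj a b ∧ G.Adj a c ∧ G.Adj a d ∧ G.Adj b c ∧ G.Adj b d ∧ G.Adj c d ∧
    D = {a, b, c, d}

/-- `P` is a partition of the vertex set of `G` into sets each inducing a triangle
or a diamond (a triangle-diamond partition). -/
def IsTDPartition (G : SimpleGraph V) (P : Set (Set V)) : Prop :=
  (∀ S ∈ P, IsTriangle G S ∨ IsDiamond G S) ∧ ∀ v : V, ∃! S : Set V, S ∈ P ∧ v ∈ S

/-- The diamond-necklace `N_k`: the vertex `(i, 0)` is `a_i`, `(i, 1)` is `b_i`,
`(i, 2)` is `c_i`, `(i, 3)` is `d_i`; inside each diamond all edges except `a_i b_i`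
are present, and consecutive diamonds are linked by the edges `a_i b_{i+1}`. -/
def diamondNecklace (k : ℕ) : SimpleGraph (ZMod k × Fin 4) :=
  SimpleGraph.fromRel (fun x y =>
    (x.1 = y.1 ∧ ¬ (x.2 = 0 ∧ y.2 = 1) ∧ ¬ (x.2 = 1 ∧ y.2 = 0))
    ∨ (y.1 = x.1 + 1 ∧ x.2 = 0 ∧ y.2 = 1))

/-- The triangle-necklace `F_{2k}`: the vertex `(j, 0)` is `x_{j+1}`, `(j, 1)` is `y_{j+1}`,
`(j, 2)` is `z_{j+1}`; each triple `{x,y,z}` with the same first coordinate is a triangle,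
and the triangles are linked by the edges `x_{2i-1}x_{2i}`, `y_{2i-1}y_{2i}` and
`z_{2i}z_{2i+1}` (indices modulo `2k`). -/
def triangleNecklace (k : ℕ) : SimpleGraph (ZMod (2 * k) × Fin 3) :=
  SimpleGraph.fromRel (fun x y =>
    (x.1 = y.1 ∧ x.2 ≠ y.2)
    ∨ (y.1 = x.1 + 1 ∧ Even x.1.val ∧ ((x.2 = 0 ∧ y.2 = 0) ∨ (x.2 = 1 ∧ y.2 = 1)))
    ∨ (y.1 = x.1 + 1 ∧ Odd x.1.val ∧ x.2 = 2 ∧ y.2 = 2))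
section Aux
variable {G : SimpleGraph V}

lemma triangle_ncard {T : Set V} (hT : IsTriangle G T) : T.ncard = 3 := by
  obtain ⟨a, b, c, hab, hac, hbc, -, -, -, rfl⟩ := hT
  rw [Set.ncard_insert_of_notMem (by simp [hab, hac]), Set.ncard_pair hbc]

lemma triangle_adj {T : Set V} (hT : IsTriangle G T) :
    ∀ u ∈ T, ∀ w ∈ T, u ≠ w → G.Adj u w := by
  obtain ⟨a, b, c, hab, hac, hbc, h1, h2, h3, rfl⟩ := hT
  rintro u hu w hw huw
  simp only [Set.mem_insert_iff, Set.mem_singleton_iff] at hu hw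
  rcases hu with rfl | rfl | rfl <;> rcases hw with rfl | rfl | rfl <;>
    first
    | exact absurd rfl huw
    | assumption
    | exact h1.symm
    | exact h2.symm
    | exact h3.symm

lemma triangle_struct {T : Set V} (hT : IsTriangle G T) {v : V} (hv : v ∈ T) :
    ∃ x y, v ≠ x ∧ v ≠ y ∧ x ≠ y ∧ G.Adj v x ∧ G.Adj v y ∧ G.Adj x y ∧ T = {v, x, y} := by
  obtain ⟨a, b, c, hab, hac, hbc, h1, h2, h3, rfl⟩ := hT
  simp only [Set.mem_insert_iff, Set.mem_singleton_iff] at hv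
  rcases hv with rfl | rfl | rfl
  · exact ⟨b, c, hab, hac, hbc, h1, h2, h3, rfl⟩
  · exact ⟨a, c, hab.symm, hbc, hac, h1.symm, h3, h2, by ext z; simp; tauto⟩
  · exact ⟨a, b, hac.symm, hbc.symm, hab, h2.symm, h3.symm, h1, by ext z; simp; tauto⟩

lemma closed_eq_univ (hconn : G.Connected) {K : Set V}
    (hne : ∃ v, v ∈ K) (hK : ∀ v ∈ K, ∀ w, G.Adj v w → w ∈ K) : K = Set.univ := by
  obtain ⟨v, hv⟩ := hne
  have main : ∀ {a b : V}, G.Walk a b → a ∈ K → b ∈ K := by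
    intro a b p
    induction p with
    | nil => exact id
    | cons h _ ih => exact fun ha => ih (hK _ ha _ h)
  ext u
  simp only [Set.mem_univ, iff_true]
  exact main (hconn.preconnected v u).some hv

end Aux

theorem stmt7 {V : Type*} [Fintype V] (G : SimpleGraph V)
    (hconn : G.Connected) (hcf : ClawFree G)
    (hcub : ∀ v : V, (G.neighborSet v).ncard = 3)
    (htri : ∀ v : V, ∃ T : Set V, IsTriangle G T ∧ v ∈ T)
    (hdia : ¬ ∃ D : Set V, IsDiamond G D)
    (hP : ∃ P : Set (Set V), IsTDPartition G P ∧ ∀ S ∈ P, IsTriangle G S) :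
    3 * indepNumber G = Fintype.card V ∧
    ∀ I : Set V, IsIndep G I → I.ncard = indepNumber G →
      ∀ T : Set V, IsTriangle G T → (I ∩ T).ncard = 1 := by
  classical
  obtain ⟨P, ⟨-, huniq⟩, hPtri⟩ := hP
  -- the unique triangle of the partition containing a vertex
  set tri : V → Set V := fun v => (huniq v).choose with htridef
  have tri_mem : ∀ v, tri v ∈ P := fun v => (huniq v).choose_spec.1.1
  have tri_self : ∀ v, v ∈ tri v := fun v => (huniq v).choose_spec.1.2
  have tri_eq : ∀ v S, S ∈ P → v ∈ S → S = tri v :=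
    fun v S h1 h2 => (huniq v).choose_spec.2 S ⟨h1, h2⟩
  -- neighbor-set description helper
  have nbr : ∀ v z1 z2 z3 : V, z1 ≠ z2 → z1 ≠ z3 → z2 ≠ z3 →
      G.Adj v z1 → G.Adj v z2 → G.Adj v z3 → G.neighborSet v = {z1, z2, z3} := by
    intro v z1 z2 z3 d1 d2 d3 A1 A2 A3
    refine (Set.eq_of_subset_of_ncard_le ?_ ?_ (Set.toFinite _)).symm
    · rintro z (rfl | rfl | rfl) <;> assumption
    · rw [hcub v, Set.ncard_insert_of_notMem (by simp [d1, d2]), Set.ncard_pair d3]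
  -- external neighbor: existence and uniqueness
  have hmm : ∀ v : V, ∃ w, (G.Adj v w ∧ w ∉ tri v) ∧ ∀ u, G.Adj v u → u ∉ tri v → u = w := by
    intro v
    obtain ⟨x, y, hvx, hvy, hxy, hax, hay, haxy, hTeq⟩ :=
      triangle_struct (hPtri _ (tri_mem v)) (tri_self v)
    have hsub : ({x, y} : Set V) ⊆ G.neighborSet v := by rintro z (rfl | rfl) <;> assumption
    have hcard : (G.neighborSet v \ {x, y}).ncard = 1 := by
      rw [Set.ncard_diff hsub, hcub v, Set.ncard_pair hxy]
    obtain ⟨w, hw⟩ := Set.ncard_eq_one.mp hcard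
    have hwmem : w ∈ G.neighborSet v \ ({x, y} : Set V) := by rw [hw]; rfl
    have hwadj : G.Adj v w := hwmem.1
    refine ⟨w, ⟨hwadj, ?_⟩, ?_⟩
    · rw [hTeq]
      rintro (h | h | h)
      · exact G.loopless.irrefl v (h ▸ hwadj)
      · exact hwmem.2 (Or.inl h)
      · exact hwmem.2 (Or.inr h)
    · intro u hu huT
      have : u ∈ G.neighborSet v \ ({x, y} : Set V) := by
        refine ⟨hu, ?_⟩
        rintro (h | h)
        · exact huT (by rw [hTeq]; exact Or.inr (Or.inl h))
        · exact huT (by rw [hTeq]; exact Or.inr (Or.inr h))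
      rw [hw] at this
      exact this
  set m : V → V := fun v => (hmm v).choose with hmdef
  have m_adj : ∀ v, G.Adj v (m v) := fun v => (hmm v).choose_spec.1.1
  have m_not : ∀ v, m v ∉ tri v := fun v => (hmm v).choose_spec.1.2
  have m_uniq : ∀ v u, G.Adj v u → u ∉ tri v → u = m v := fun v => (hmm v).choose_spec.2
  have self_not_tri_m : ∀ v, v ∉ tri (m v) := by
    intro v hv
    have h1 : tri (m v) = tri v := tri_eq v (tri (m v)) (tri_mem (m v)) hv
    exact m_not v (h1 ▸ tri_self (m v))
  have m_invol : ∀ v, m (m v) = v := fun v => (m_uniq (m v) v (m_adj v).symm (self_not_tri_m v)).symm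
  have adj_cross : ∀ u w, G.Adj u w → tri u ≠ tri w → w = m u := by
    intro u w h hne
    refine m_uniq u w h fun hwin => hne ?_
    exact (tri_eq w _ (tri_mem u) hwin)
  -- every triangle of G belongs to P
  have key : ∀ T, IsTriangle G T → T ∈ P := by
    intro T hT
    obtain ⟨a, b, c, hab, hac, hbc, h1, h2, h3, rfl⟩ := hT
    by_cases hTS : ({a, b, c} : Set V) = tri a
    · rw [hTS]; exact tri_mem a
    obtain ⟨x, y, hax', hay', hxy, hAx, hAy, hAxy, hSeq⟩ :=
      triangle_struct (hPtri _ (tri_mem a)) (tri_self a)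
    have core : ∀ b' c' y' : V, a ≠ b' → a ≠ c' → b' ≠ c' → a ≠ y' → b' ≠ y' → c' ≠ y' →
        G.Adj a b' → G.Adj a c' → G.Adj b' c' → G.Adj a y' → G.Adj b' y' →
        tri a = {a, b', y'} → False := by
      intro b' c' y' d1 d2 d3 d4 d5 d6 A1 A2 A3 A4 A5 hS
      by_cases hcy : G.Adj c' y'
      · -- K4 case: the component is {a, b', c', y'}
        have hKuniv : ({a, b', c', y'} : Set V) = Set.univ := by
          refine closed_eq_univ hconn ⟨a, Or.inl rfl⟩ ?_
          rintro v (rfl | rfl | rfl | rfl) w hw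
          · have hw' : w ∈ G.neighborSet v := hw
            rw [nbr v b' c' y' d3 d5 d6 A1 A2 A4] at hw'
            rcases hw' with rfl | rfl | rfl
            · exact Or.inr (Or.inl rfl)
            · exact Or.inr (Or.inr (Or.inl rfl))
            · exact Or.inr (Or.inr (Or.inr rfl))
          · have hw' : w ∈ G.neighborSet v := hw
            rw [nbr v a c' y' d2 d4 d6 A1.symm A3 A5] at hw'
            rcases hw' with rfl | rfl | rfl
            · exact Or.inl rfl
            · exact Or.inr (Or.inr (Or.inl rfl))
            · exact Or.inr (Or.inr (Or.inr rfl))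
          · have hw' : w ∈ G.neighborSet v := hw
            rw [nbr v a b' y' d1 d4 d5 A2.symm A3.symm hcy] at hw'
            rcases hw' with rfl | rfl | rfl
            · exact Or.inl rfl
            · exact Or.inr (Or.inl rfl)
            · exact Or.inr (Or.inr (Or.inr rfl))
          · have hw' : w ∈ G.neighborSet v := hw
            rw [nbr v a b' c' d1 d2 d3 A4.symm A5.symm hcy.symm] at hw'
            rcases hw' with rfl | rfl | rfl
            · exact Or.inl rfl
            · exact Or.inr (Or.inl rfl)
            · exact Or.inr (Or.inr (Or.inl rfl))
        -- the triangle of c' would have to live inside {c'}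
        have hc'notS : c' ∉ tri a := by
          rw [hS]
          rintro (rfl | rfl | rfl)
          · exact d2 rfl
          · exact d3 rfl
          · exact d6 rfl
        have hsub : tri c' ⊆ {c'} := by
          intro z hz
          have hz2 : z ∉ tri a := by
            intro hzS
            have e1 : tri a = tri z := tri_eq z _ (tri_mem a) hzS
            have e2 : tri c' = tri z := tri_eq z _ (tri_mem c') hz
            exact hc'notS (e1 ▸ e2 ▸ tri_self c')
          have hzuniv : z ∈ ({a, b', c', y'} : Set V) := hKuniv ▸ Set.mem_univ z
          rcases hzuniv with rfl | rfl | rfl | rfl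
          · exact absurd (hS ▸ (Or.inl rfl : z ∈ ({z, b', y'} : Set V))) hz2
          · exact absurd (hS ▸ (Or.inr (Or.inl rfl) : z ∈ ({a, z, y'} : Set V))) hz2
          · exact rfl
          · exact absurd (hS ▸ (Or.inr (Or.inr rfl) : z ∈ ({a, b', z} : Set V))) hz2
        have h3' := triangle_ncard (hPtri _ (tri_mem c'))
        have hle : (tri c').ncard ≤ 1 := by
          have := Set.ncard_le_ncard hsub (Set.toFinite _)
          simpa using this
        omega
      · -- diamond case
        exact hdia ⟨{c', y', a, b'}, c', y', a, b', d6, d2.symm, d3.symm, d4.symm, d5.symm, d1,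
          hcy, A2.symm, A3.symm, A4.symm, A5.symm, A1, rfl⟩
    -- overlap analysis: one of b,c coincides with one of x,y
    have hover : b = x ∨ b = y ∨ c = x ∨ c = y := by
      by_contra hcon
      push_neg at hcon
      obtain ⟨n1, n2, n3, n4⟩ := hcon
      have hsub : ({b, c, x, y} : Set V) ⊆ G.neighborSet a := by
        rintro z (rfl | rfl | rfl | rfl) <;> assumption
      have h4 : ({b, c, x, y} : Set V).ncard = 4 := by
        rw [Set.ncard_insert_of_notMem (by simp [hbc, n1, n2]),
          Set.ncard_insert_of_notMem (by simp [n3, n4]), Set.ncard_pair hxy]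
      have := Set.ncard_le_ncard hsub (Set.toFinite _)
      rw [hcub a, h4] at this
      omega
    rcases hover with rfl | rfl | rfl | rfl
    · -- b = x
      have hcy : c ≠ y := by
        rintro rfl
        exact hTS hSeq.symm
      exact absurd (core b c y hab hac hbc hay' hxy hcy h1 h2 h3 hAy hAxy hSeq) id
    · -- b = y  (here x is renamed: S = {a, x, b})
      have hcx : c ≠ x := by
        rintro rfl
        refine hTS ?_
        rw [hSeq]
        ext z; simp only [Set.mem_insert_iff, Set.mem_singleton_iff]; tauto
      exact absurd (core b c x hab hac hbc hax' (Ne.symm hxy) hcx h1 h2 h3 hAx hAxy.symm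
        (by rw [hSeq]; ext z; simp only [Set.mem_insert_iff, Set.mem_singleton_iff]; tauto)) id
    · -- c = x
      have hby : b ≠ y := by
        rintro rfl
        refine hTS ?_
        rw [hSeq]
        ext z; simp only [Set.mem_insert_iff, Set.mem_singleton_iff]; tauto
      exact absurd (core c b y hac hab hbc.symm hay' hxy hby h2 h1 h3.symm hAy hAxy hSeq) id
    · -- c = y  (S = {a, x, c})
      have hbx : b ≠ x := by
        rintro rfl
        refine hTS ?_
        rw [hSeq]
      exact absurd (core c b x hac hab hbc.symm hax' (Ne.symm hxy) hbx h2 h1 h3.symm hAx hAxy.symm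
        (by rw [hSeq]; ext z; simp only [Set.mem_insert_iff, Set.mem_singleton_iff]; tauto)) id
  -- finset versions
  have hPfin : P.Finite := Set.toFinite P
  set PF : Finset (Set V) := hPfin.toFinset with hPFdef
  have hPFmem : ∀ S, S ∈ PF ↔ S ∈ P := fun S => hPfin.mem_toFinset
  set StF : Set V → Finset V := fun S => (Set.toFinite S).toFinset with hStFdef
  have hStFmem : ∀ S v, v ∈ StF S ↔ v ∈ S := fun S v => (Set.toFinite S).mem_toFinset
  have hStFcard : ∀ S ∈ P, (StF S).card = 3 := by
    intro S hS
    rw [← Set.ncard_eq_toFinset_card S (Set.toFinite S)]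
    exact triangle_ncard (hPtri _ hS)
  -- cardinality of V
  have hcardV : Fintype.card V = 3 * PF.card := by
    have hdisj : ∀ S ∈ PF, ∀ S' ∈ PF, S ≠ S' → Disjoint (StF S) (StF S') := by
      intro S hS S' hS' hne
      rw [Finset.disjoint_left]
      intro z hz hz'
      rw [hStFmem] at hz hz'
      exact hne ((tri_eq z S ((hPFmem S).mp hS) hz).trans (tri_eq z S' ((hPFmem S').mp hS') hz').symm)
    have huniv : (Finset.univ : Finset V) = PF.biUnion StF := by
      ext v
      simp only [Finset.mem_univ, true_iff, Finset.mem_biUnion]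
      exact ⟨tri v, (hPFmem _).mpr (tri_mem v), (hStFmem _ _).mpr (tri_self v)⟩
    rw [← Finset.card_univ, huniv, Finset.card_biUnion hdisj]
    rw [Finset.sum_congr rfl fun S hS => hStFcard S ((hPFmem S).mp hS), Finset.sum_const,
      smul_eq_mul, mul_comm]
  -- upper bound for independent sets
  have indep_le : ∀ I : Set V, IsIndep G I → I.ncard ≤ PF.card := by
    intro I hI
    have hinj : Set.InjOn tri I := by
      intro u hu w hw he
      by_contra hne
      exact hI hu hw hne
        (triangle_adj (hPtri _ (tri_mem u)) u (tri_self u) w (he ▸ tri_self w) hne)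
    calc I.ncard = (tri '' I).ncard := (Set.ncard_image_of_injOn hinj).symm
      _ ≤ (PF : Set (Set V)).ncard := by
          refine Set.ncard_le_ncard ?_ (Set.toFinite _)
          rintro _ ⟨u, -, rfl⟩
          exact (hPFmem _).mpr (tri_mem u)
      _ = PF.card := Set.ncard_coe_finset PF
  -- Hall's theorem setup
  set edge : V → Finset V := fun v => {v, m v} with hedgedef
  set tS : {S : Set V // S ∈ PF} → Finset (Finset V) := fun S => (StF S.1).image edge with htSdef
  have edge_injOn : ∀ S ∈ P, ∀ u ∈ S, ∀ w ∈ S, edge u = edge w → u = w := by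
    intro S hS u hu w hw he
    have h1 : u ∈ edge u := Finset.mem_insert_self u {m u}
    rw [he] at h1
    have h1' : u = w ∨ u ∈ ({m w} : Finset V) := Finset.mem_insert.mp h1
    rcases h1' with h | h
    · exact h
    · exfalso
      rw [Finset.mem_singleton] at h
      subst h
      have e1 : S = tri w := tri_eq w S hS hw
      exact m_not w (e1 ▸ hu)
  have t_card : ∀ S : {S : Set V // S ∈ PF}, (tS S).card = 3 := by
    intro S
    have hSP : S.1 ∈ P := (hPFmem _).mp S.2
    show ((StF S.1).image edge).card = 3
    rw [Finset.card_image_of_injOn fun u hu w hw =>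
      edge_injOn S.1 hSP u ((hStFmem _ _).mp hu) w ((hStFmem _ _).mp hw)]
    exact hStFcard S.1 hSP
  have hall : ∀ s : Finset {S : Set V // S ∈ PF}, s.card ≤ (s.biUnion tS).card := by
    intro s
    have hmle : ∀ S ∈ s, 3 ≤ ((s.biUnion tS).bipartiteAbove (fun S e => e ∈ tS S) S).card := by
      intro S hS
      have hsub : tS S ⊆ (s.biUnion tS).bipartiteAbove (fun S e => e ∈ tS S) S := by
        intro e he
        rw [Finset.mem_bipartiteAbove]
        exact ⟨Finset.mem_biUnion.mpr ⟨S, hS, he⟩, he⟩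
      calc 3 = (tS S).card := (t_card S).symm
        _ ≤ _ := Finset.card_le_card hsub
    have hnle : ∀ e ∈ s.biUnion tS,
        (s.bipartiteBelow (fun S e => e ∈ tS S) e).card ≤ 2 := by
      intro e he
      obtain ⟨S0, hS0, he0⟩ := Finset.mem_biUnion.mp he
      obtain ⟨v0, hv0, rfl⟩ := Finset.mem_image.mp he0
      set f : {S : Set V // S ∈ PF} → V := fun S =>
        if h : ∃ v, v ∈ StF S.1 ∧ edge v = edge v0 then h.choose else v0 with hfdef
      have hmaps : ∀ S ∈ Finset.bipartiteBelow (fun S e => e ∈ tS S) s (edge v0),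
          f S ∈ edge v0 := by
        intro S hS
        rw [Finset.mem_bipartiteBelow] at hS
        obtain ⟨v, hv, hev⟩ := Finset.mem_image.mp hS.2
        have hex : ∃ v, v ∈ StF S.1 ∧ edge v = edge v0 := ⟨v, hv, hev⟩
        have hfS : f S = hex.choose := dif_pos hex
        have hmem : hex.choose ∈ edge hex.choose := Finset.mem_insert_self _ _
        rw [hex.choose_spec.2] at hmem
        rw [hfS]
        exact hmem
      have hinj : Set.InjOn f (Finset.bipartiteBelow (fun S e => e ∈ tS S) s (edge v0)) := by
        intro S hS S' hS' hff
        simp only [Finset.mem_coe, Finset.mem_bipartiteBelow] at hS hS'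
        have hexS : ∃ v, v ∈ StF S.1 ∧ edge v = edge v0 := by
          obtain ⟨v, hv, hev⟩ := Finset.mem_image.mp hS.2
          exact ⟨v, hv, hev⟩
        have hexS' : ∃ v, v ∈ StF S'.1 ∧ edge v = edge v0 := by
          obtain ⟨v, hv, hev⟩ := Finset.mem_image.mp hS'.2
          exact ⟨v, hv, hev⟩
        have hfS : f S = hexS.choose := dif_pos hexS
        have hfS' : f S' = hexS'.choose := dif_pos hexS'
        rw [hfS, hfS'] at hff
        have m1 : hexS.choose ∈ S.1 := (hStFmem _ _).mp hexS.choose_spec.1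
        have m2 : hexS'.choose ∈ S'.1 := (hStFmem _ _).mp hexS'.choose_spec.1
        rw [hff] at m1
        exact Subtype.ext ((tri_eq _ _ ((hPFmem _).mp S.2) m1).trans
          (tri_eq _ _ ((hPFmem _).mp S'.2) m2).symm)
      calc (Finset.bipartiteBelow (fun S e => e ∈ tS S) s (edge v0)).card
          ≤ (edge v0).card := Finset.card_le_card_of_injOn f hmaps hinj
        _ ≤ 2 := by
            show ({v0, m v0} : Finset V).card ≤ 2
            exact (Finset.card_insert_le _ _).trans (by simp)
    have hcount := Finset.card_mul_le_card_mul (fun S e => e ∈ tS S) hmle hnle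
    omega
  obtain ⟨f, hfinj, hft⟩ := (Finset.all_card_le_biUnion_card_iff_exists_injective tS).mp hall
  have hg : ∀ S : {S : Set V // S ∈ PF}, ∃ v, v ∈ StF S.1 ∧ edge v = f S := by
    intro S
    obtain ⟨v, hv, hev⟩ := Finset.mem_image.mp (hft S)
    exact ⟨v, hv, hev⟩
  set g : {S : Set V // S ∈ PF} → V := fun S => (hg S).choose with hgdef
  have hgmem : ∀ S, g S ∈ S.1 := fun S => (hStFmem _ _).mp (hg S).choose_spec.1
  have hgedge : ∀ S, edge (g S) = f S := fun S => (hg S).choose_spec.2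
  have tri_g : ∀ S, tri (g S) = S.1 := fun S =>
    (tri_eq (g S) S.1 ((hPFmem _).mp S.2) (hgmem S)).symm
  have hginj : Function.Injective g := by
    intro S S' h
    apply hfinj
    rw [← hgedge, ← hgedge, h]
  have hIindep : IsIndep G (Set.range g) := by
    rintro _ ⟨S, rfl⟩ _ ⟨S', rfl⟩ hne hadj
    have hSS' : S ≠ S' := fun h => hne (h ▸ rfl)
    have htri : tri (g S) ≠ tri (g S') := by
      rw [tri_g, tri_g]
      exact fun h => hSS' (Subtype.ext h)
    have h1 : g S' = m (g S) := adj_cross _ _ hadj htri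
    have h2 : f S' = f S := by
      rw [← hgedge, ← hgedge, h1]
      show ({m (g S), m (m (g S))} : Finset V) = {g S, m (g S)}
      rw [m_invol]
      exact Finset.pair_comm _ _
    exact hSS' (hfinj h2).symm
  have hIcard : (Set.range g).ncard = PF.card := by
    rw [← Set.image_univ, Set.ncard_image_of_injective _ hginj, Set.ncard_univ,
      Nat.card_eq_fintype_card, Fintype.card_coe]
  -- independence number
  have hidp : indepNumber G = PF.card := by
    have hA : PF.card ∈ {k | ∃ I : Set V, I.ncard = k ∧ IsIndep G I} :=
      ⟨Set.range g, hIcard, hIindep⟩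
    have hub : ∀ k ∈ {k | ∃ I : Set V, I.ncard = k ∧ IsIndep G I}, k ≤ PF.card := by
      rintro k ⟨I, rfl, hI⟩
      exact indep_le I hI
    exact le_antisymm (csSup_le ⟨_, hA⟩ hub) (le_csSup ⟨PF.card, hub⟩ hA)
  constructor
  · rw [hidp, hcardV]
  · intro I hI hIc T hT
    have hTP : T ∈ P := key T hT
    have hIfin : I.Finite := Set.toFinite I
    set IF : Finset V := hIfin.toFinset with hIFdef
    have hIFmem : ∀ v, v ∈ IF ↔ v ∈ I := fun v => hIfin.mem_toFinset
    have hinj : Set.InjOn tri I := by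
      intro u hu w hw he
      by_contra hne
      exact hI hu hw hne
        (triangle_adj (hPtri _ (tri_mem u)) u (tri_self u) w (he ▸ tri_self w) hne)
    have himsub : IF.image tri ⊆ PF := by
      intro S hS
      obtain ⟨u, -, rfl⟩ := Finset.mem_image.mp hS
      exact (hPFmem _).mpr (tri_mem u)
    have himcard : (IF.image tri).card = PF.card := by
      rw [Finset.card_image_of_injOn (fun u hu w hw => hinj ((hIFmem u).mp hu) ((hIFmem w).mp hw))]
      rw [← Set.ncard_eq_toFinset_card I hIfin, hIc, hidp]
    have him : IF.image tri = PF := Finset.eq_of_subset_of_card_le himsub (le_of_eq himcard.symm)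
    have hTim : T ∈ IF.image tri := him ▸ (hPFmem T).mpr hTP
    obtain ⟨u, huIF, huT⟩ := Finset.mem_image.mp hTim
    have huI : u ∈ I := (hIFmem u).mp huIF
    have hIT : I ∩ T = {u} := by
      ext z
      constructor
      · rintro ⟨hzI, hzT⟩
        have : tri z = T := (tri_eq z T hTP hzT).symm
        exact hinj hzI huI (this.trans huT.symm)
      · rintro rfl
        exact ⟨huI, huT ▸ tri_self z⟩
    rw [hIT, Set.ncard_singleton]
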